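/- Let n ≥ 1 and let a, b : {1,…,n} → ℝ be vectors with strictly positive entries arranged in nonincreasing order (a₁ ≥ a₂ ≥ … ≥ a_n > 0 and b₁ ≥ b₂ ≥ … ≥ b_n > 0). Suppose a is multiplicatively majorized by b, i.e. ∏_{i=1}^k a_i ≤ ∏_{i=1}^k b_i for every k with 1 ≤ k ≤ n, and ∏_{i=1}^n a_i = ∏_{i=1}^n b_i. Then a is weakly majorized by b: Σ_{i=1}^k a_i ≤ Σ_{i=1}^k b_i for every k with 1 ≤ k ≤ n; in particular Σ_{i=1}^n a_i ≤ Σ_{i=1}^n b_i. -/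

import Mathlib

open BigOperators

/-- Multiplicative majorization implies weak (additive) majorization for positive
nonincreasing vectors (Marshall–Olkin 5.A.2.b): if all leading partial products
of `a` are bounded by those of `b`, with equality of the full products, then all
leading partial sums of `a` are bounded by those of `b`. -/
theorem mul_majorize_imp_weak_majorize (n : ℕ) (hn : 1 ≤ n) (a b : ℕ → ℝ)
    (ha_pos : ∀ i < n, 0 < a i) (hb_pos : ∀ i < n, 0 < b i)
    (ha_anti : ∀ i, i + 1 < n → a (i + 1) ≤ a i)
    (hb_anti : ∀ i, i + 1 < n → b (i + 1) ≤ b i)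
    (hmaj : ∀ k, 1 ≤ k → k ≤ n →
      ∏ i ∈ Finset.range k, a i ≤ ∏ i ∈ Finset.range k, b i)
    (heq : ∏ i ∈ Finset.range n, a i = ∏ i ∈ Finset.range n, b i) :
    ∀ k, 1 ≤ k → k ≤ n →
      ∑ i ∈ Finset.range k, a i ≤ ∑ i ∈ Finset.range k, b i := by
  set d : ℕ → ℝ := fun i => Real.log (a i) - Real.log (b i) with hd
  -- Partial sums of `d` are nonpositive (take logs of the product inequalities)
  have hS : ∀ j, 1 ≤ j → j ≤ n → ∑ i ∈ Finset.range j, d i ≤ 0 := by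
    intro j hj1 hjn
    have hpa : ∀ i ∈ Finset.range j, 0 < a i := fun i hi =>
      ha_pos i (lt_of_lt_of_le (Finset.mem_range.mp hi) hjn)
    have hpb : ∀ i ∈ Finset.range j, 0 < b i := fun i hi =>
      hb_pos i (lt_of_lt_of_le (Finset.mem_range.mp hi) hjn)
    have hla : ∑ i ∈ Finset.range j, Real.log (a i)
        = Real.log (∏ i ∈ Finset.range j, a i) :=
      (Real.log_prod (fun i hi => (hpa i hi).ne')).symm
    have hlb : ∑ i ∈ Finset.range j, Real.log (b i)
        = Real.log (∏ i ∈ Finset.range j, b i) :=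
      (Real.log_prod (fun i hi => (hpb i hi).ne')).symm
    have hprodpos : 0 < ∏ i ∈ Finset.range j, a i := Finset.prod_pos hpa
    have hlog := Real.log_le_log hprodpos (hmaj j hj1 hjn)
    simp only [hd, Finset.sum_sub_distrib]
    rw [hla, hlb]
    linarith
  -- Pointwise tangent-line bound: a i - b i ≤ a i * d i
  have hpt : ∀ i, i < n → a i - b i ≤ a i * d i := by
    intro i hi
    have hai := ha_pos i hi
    have hbi := hb_pos i hi
    have h := Real.log_le_sub_one_of_pos (div_pos hbi hai)
    rw [Real.log_div hbi.ne' hai.ne'] at h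
    have h2 := mul_le_mul_of_nonneg_left h hai.le
    have h3 : a i * (b i / a i - 1) = b i - a i := by
      field_simp
    rw [h3] at h2
    simp only [hd]
    nlinarith
  -- Abel summation bound
  have habel : ∀ j, 1 ≤ j → j ≤ n →
      ∑ i ∈ Finset.range j, a i * d i ≤ a (j - 1) * ∑ i ∈ Finset.range j, d i := by
    intro j hj1
    induction j, hj1 using Nat.le_induction with
    | base => intro _; simp
    | succ j hj ih =>
      intro hjn
      have hjn' : j ≤ n := le_trans (Nat.le_succ j) hjn
      have hjltn : j < n := lt_of_lt_of_le (Nat.lt_succ_self j) hjn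
      have ih' := ih hjn'
      have hS' := hS j hj hjn'
      have hanti : a j ≤ a (j - 1) := by
        have h1 : j - 1 + 1 = j := Nat.sub_add_cancel hj
        have := ha_anti (j - 1) (by omega)
        rwa [h1] at this
      have hmul : a (j - 1) * ∑ i ∈ Finset.range j, d i
          ≤ a j * ∑ i ∈ Finset.range j, d i :=
        mul_le_mul_of_nonpos_right hanti hS'
      rw [Finset.sum_range_succ, Finset.sum_range_succ]
      have hidx : j + 1 - 1 = j := rfl
      rw [hidx, mul_add]
      linarith
  intro k hk1 hkn
  have hsum : ∑ i ∈ Finset.range k, (a i - b i) ≤ ∑ i ∈ Finset.range k, a i * d i :=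
    Finset.sum_le_sum fun i hi => hpt i (lt_of_lt_of_le (Finset.mem_range.mp hi) hkn)
  have hfin : a (k - 1) * ∑ i ∈ Finset.range k, d i ≤ 0 :=
    mul_nonpos_of_nonneg_of_nonpos (ha_pos (k - 1) (by omega)).le (hS k hk1 hkn)
  have := le_trans hsum (le_trans (habel k hk1 hkn) hfin)
  rw [Finset.sum_sub_distrib] at this
  linarith
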